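/- Let f be an operator monotone function on [0,∞) with values in [0,∞), f(1) = 1, and let σ be the associated operator mean A σ B = A^{1/2} f(A^{-1/2}BA^{-1/2}) A^{1/2} with μ = f'(1). Then for all positive definite matrices A, B: A !_μ B ≤ A σ B ≤ A ∇_μ B in the Löwner order. -/

import Mathlib

open Matrix ComplexOrder
set_option maxHeartbeats 1000000

/-- Matrix square root via the real continuous functional calculus. -/
noncomputable def msqrt {n : ℕ} (A : Matrix (Fin n) (Fin n) ℂ) :
    Matrix (Fin n) (Fin n) ℂ :=
  cfc Real.sqrt A

/-- The Kubo–Ando mean associated to a representing function `f`: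
`A σ_f B = A^{1/2} f(A^{-1/2} B A^{-1/2}) A^{1/2}`. -/
noncomputable def opMean {n : ℕ} (f : ℝ → ℝ) (A B : Matrix (Fin n) (Fin n) ℂ) :
    Matrix (Fin n) (Fin n) ℂ :=
  msqrt A * cfc f ((msqrt A)⁻¹ * B * (msqrt A)⁻¹) * msqrt A

/-- A function `f : ℝ → ℝ` is operator monotone on `[0,∞)` if it is monotone for the
Löwner order on positive semidefinite matrices of every size. -/
def OperatorMonotone (f : ℝ → ℝ) : Prop :=
  ∀ (n : ℕ) (A B : Matrix (Fin n) (Fin n) ℂ), A.PosSemidef → B.PosSemidef →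
    (B - A).PosSemidef → (cfc f B - cfc f A).PosSemidef

namespace MeanAux

variable {n : ℕ}

/-! ### Generic continuity/spectrum helpers -/

lemma contOn (f : ℝ → ℝ) (A : Matrix (Fin n) (Fin n) ℂ) : ContinuousOn f (spectrum ℝ A) := by
  rw [continuousOn_iff_continuous_restrict]; exact continuous_of_discreteTopology

lemma contOn_finite (f : ℝ → ℝ) {s : Set ℝ} (hs : s.Finite) : ContinuousOn f s := by
  have : Finite s := hs
  rw [continuousOn_iff_continuous_restrict]; exact continuous_of_discreteTopology

lemma specNonneg {A : Matrix (Fin n) (Fin n) ℂ} (hA : A.PosSemidef) :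
    ∀ x ∈ spectrum ℝ A, 0 ≤ x := by
  intro x hx
  rw [hA.isHermitian.spectrum_real_eq_range_eigenvalues] at hx
  obtain ⟨i, rfl⟩ := hx
  exact hA.eigenvalues_nonneg i

lemma specPos {A : Matrix (Fin n) (Fin n) ℂ} (hA : A.PosDef) :
    ∀ x ∈ spectrum ℝ A, 0 < x := by
  intro x hx
  rw [hA.isHermitian.spectrum_real_eq_range_eigenvalues] at hx
  obtain ⟨i, rfl⟩ := hx
  exact hA.eigenvalues_pos i

lemma sa_iff_herm {N : ℕ} {M : Matrix (Fin N) (Fin N) ℂ} :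
    IsSelfAdjoint M ↔ M.IsHermitian :=
  ⟨fun h => by rw [Matrix.IsHermitian, ← Matrix.star_eq_conjTranspose, h.star_eq],
   fun h => h.isSelfAdjoint⟩

lemma cfc_psd {A : Matrix (Fin n) (Fin n) ℂ} (hA : IsSelfAdjoint A) {g : ℝ → ℝ}
    (hg : ∀ x ∈ spectrum ℝ A, 0 ≤ g x) : (cfc g A).PosSemidef := by
  have hsa : IsSelfAdjoint (cfc (fun x => Real.sqrt (g x)) A) := cfc_predicate _ _
  have h1 : cfc g A
      = (cfc (fun x => Real.sqrt (g x)) A)ᴴ * (cfc (fun x => Real.sqrt (g x)) A) := by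
    rw [← Matrix.star_eq_conjTranspose, hsa.star_eq,
      ← cfc_mul _ _ A (contOn _ A) (contOn _ A)]
    exact cfc_congr fun x hx => (Real.mul_self_sqrt (hg x hx)).symm
  rw [h1]
  exact Matrix.posSemidef_conjTranspose_mul_self _

lemma posDef_of_posSemidef_isUnit {A : Matrix (Fin n) (Fin n) ℂ} (h : A.PosSemidef)
    (hu : IsUnit A) : A.PosDef := by
  refine Matrix.PosDef.of_dotProduct_mulVec_pos h.isHermitian fun x hx => ?_
  have hinj : Function.Injective (A.mulVec) := Matrix.mulVec_injective_iff_isUnit.mpr hu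
  have hne : A *ᵥ x ≠ 0 := by
    intro hz
    exact hx (hinj (by simpa using hz))
  have h0 : star x ⬝ᵥ A *ᵥ x ≠ 0 := fun hc => hne ((h.dotProduct_mulVec_zero_iff x).mp hc)
  exact lt_of_le_of_ne (h.dotProduct_mulVec_nonneg x) (Ne.symm h0)

lemma cfc_mul_cfc_inv {A : Matrix (Fin n) (Fin n) ℂ} (hA : IsSelfAdjoint A) {g : ℝ → ℝ}
    (hg : ∀ x ∈ spectrum ℝ A, g x ≠ 0) :
    cfc g A * cfc (fun x => (g x)⁻¹) A = 1 := by
  rw [← cfc_mul _ _ A (contOn _ A) (contOn _ A)]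
  have : cfc (fun x => g x * (g x)⁻¹) A = cfc (fun _ : ℝ => (1:ℝ)) A :=
    cfc_congr fun x hx => mul_inv_cancel₀ (hg x hx)
  rw [this, ← Pi.one_def, cfc_one ℝ A]

lemma cfc_inv_eq {A : Matrix (Fin n) (Fin n) ℂ} (hA : IsSelfAdjoint A) {g : ℝ → ℝ}
    (hg : ∀ x ∈ spectrum ℝ A, g x ≠ 0) :
    (cfc g A)⁻¹ = cfc (fun x => (g x)⁻¹) A :=
  Matrix.inv_eq_right_inv (cfc_mul_cfc_inv hA hg)

lemma cfc_isUnit {A : Matrix (Fin n) (Fin n) ℂ} (hA : IsSelfAdjoint A) {g : ℝ → ℝ}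
    (hg : ∀ x ∈ spectrum ℝ A, g x ≠ 0) : IsUnit (cfc g A) :=
  IsUnit.of_mul_eq_one _ (cfc_mul_cfc_inv hA hg)

lemma cfc_pd {A : Matrix (Fin n) (Fin n) ℂ} (hA : IsSelfAdjoint A) {g : ℝ → ℝ}
    (hg : ∀ x ∈ spectrum ℝ A, 0 < g x) : (cfc g A).PosDef :=
  posDef_of_posSemidef_isUnit (cfc_psd hA fun x hx => (hg x hx).le)
    (cfc_isUnit hA fun x hx => (hg x hx).ne')

lemma inv_eq_cfc_inv {A : Matrix (Fin n) (Fin n) ℂ} (hA : A.PosDef) :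
    A⁻¹ = cfc (fun x : ℝ => x⁻¹) A := by
  have hsa : IsSelfAdjoint A := hA.isHermitian.isSelfAdjoint
  have h := cfc_inv_eq (A := A) hsa (g := fun x => x) (fun x hx => (specPos hA x hx).ne')
  rwa [cfc_id' ℝ A] at h

/-! ### msqrt -/

lemma msqrt_sa {A : Matrix (Fin n) (Fin n) ℂ} (hA : IsSelfAdjoint A) :
    IsSelfAdjoint (msqrt A) := cfc_predicate _ _

lemma msqrt_mul_self {A : Matrix (Fin n) (Fin n) ℂ} (hA : A.PosDef) :
    msqrt A * msqrt A = A := by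
  have hsa : IsSelfAdjoint A := hA.isHermitian.isSelfAdjoint
  show cfc Real.sqrt A * cfc Real.sqrt A = A
  rw [← cfc_mul _ _ A (contOn _ A) (contOn _ A)]
  have : cfc (fun x => Real.sqrt x * Real.sqrt x) A = cfc (fun x : ℝ => x) A :=
    cfc_congr fun x hx => Real.mul_self_sqrt (specPos hA x hx).le
  rw [this, cfc_id' ℝ A]

lemma msqrt_posDef {A : Matrix (Fin n) (Fin n) ℂ} (hA : A.PosDef) : (msqrt A).PosDef := by
  have hsa : IsSelfAdjoint A := hA.isHermitian.isSelfAdjoint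
  exact cfc_pd hsa fun x hx => Real.sqrt_pos.mpr (specPos hA x hx)

/-! ### Congruence -/

lemma congr_psd {M S : Matrix (Fin n) (Fin n) ℂ} (hM : M.PosSemidef) (hS : IsSelfAdjoint S) :
    (S * M * S).PosSemidef := by
  have := hM.conjTranspose_mul_mul_same (B := S)
  rwa [← Matrix.star_eq_conjTranspose, hS.star_eq] at this

lemma congr_pd {M S : Matrix (Fin n) (Fin n) ℂ} (hM : M.PosDef) (hS : IsSelfAdjoint S)
    (hu : IsUnit S) : (S * M * S).PosDef :=
  posDef_of_posSemidef_isUnit (congr_psd hM.posSemidef hS) ((hu.mul hM.isUnit).mul hu)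

lemma inv_antitone {A B : Matrix (Fin n) (Fin n) ℂ} (hA : A.PosDef) (hB : B.PosDef)
    (h : (B - A).PosSemidef) : (A⁻¹ - B⁻¹).PosSemidef := by
  set S := msqrt B with hSdef
  have hS : S.PosDef := msqrt_posDef hB
  have hSsa : IsSelfAdjoint S := msqrt_sa hB.isHermitian.isSelfAdjoint
  have hSu : IsUnit S := hS.isUnit
  have hdet : IsUnit S.det := (Matrix.isUnit_iff_isUnit_det S).mp hSu
  have hSS : S * S = B := msqrt_mul_self hB
  have hSiu : IsUnit S⁻¹ := hS.inv.isUnit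
  have hSisa : IsSelfAdjoint S⁻¹ := sa_iff_herm.mpr (sa_iff_herm.mp hSsa).inv
  set X := S⁻¹ * A * S⁻¹ with hXdef
  have hX : X.PosDef := congr_pd hA hSisa hSiu
  have hXsa : IsSelfAdjoint X := hX.isHermitian.isSelfAdjoint
  have hBX : S⁻¹ * B * S⁻¹ = 1 := by
    rw [← hSS, ← Matrix.mul_assoc, Matrix.nonsing_inv_mul S hdet, Matrix.one_mul,
      Matrix.mul_nonsing_inv S hdet]
  have h1X : ((1 : Matrix (Fin n) (Fin n) ℂ) - X).PosSemidef := by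
    have hcong := congr_psd h hSisa
    have : S⁻¹ * (B - A) * S⁻¹ = 1 - X := by
      rw [Matrix.mul_sub, Matrix.sub_mul, hBX, hXdef]
    rwa [this] at hcong
  -- spectrum of X lies in (0, 1]
  have hspec1 : ∀ x ∈ spectrum ℝ X, x ≤ 1 := by
    intro x hx
    have hmem : (1 - x) ∈ spectrum ℝ ((1 : Matrix (Fin n) (Fin n) ℂ) - X) := by
      rw [spectrum.mem_iff] at hx ⊢
      intro hcon
      apply hx
      have : algebraMap ℝ (Matrix (Fin n) (Fin n) ℂ) (1 - x) - (1 - X)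
          = -(algebraMap ℝ (Matrix (Fin n) (Fin n) ℂ) x - X) := by
        rw [map_sub, _root_.map_one]; abel
      rw [this] at hcon
      exact (IsUnit.neg_iff _).mp hcon
    have := specNonneg h1X _ hmem
    linarith
  -- X⁻¹ - 1 is psd
  have hXinv : (X⁻¹ - 1).PosSemidef := by
    have hcalc : X⁻¹ - 1 = cfc (fun y : ℝ => y⁻¹ - 1) X := by
      rw [cfc_sub _ _ X (contOn _ X) (contOn _ X), ← inv_eq_cfc_inv hX, ← Pi.one_def,
        cfc_one ℝ X]
    rw [hcalc]
    refine cfc_psd hXsa fun x hx => ?_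
    have h1 : 0 < x := specPos hX x hx
    have h2 : x ≤ 1 := hspec1 x hx
    have : (1:ℝ) ≤ x⁻¹ := (one_le_inv₀ h1).mpr h2
    linarith
  -- transport back
  have hXinvEq : X⁻¹ = S * A⁻¹ * S := by
    rw [hXdef, Matrix.mul_inv_rev, Matrix.mul_inv_rev,
      Matrix.nonsing_inv_nonsing_inv S hdet, Matrix.mul_assoc]
  have hfin : S⁻¹ * (X⁻¹ - 1) * S⁻¹ = A⁻¹ - B⁻¹ := by
    rw [Matrix.mul_sub, Matrix.sub_mul, hXinvEq]
    congr 1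
    · rw [← Matrix.mul_assoc, ← Matrix.mul_assoc, Matrix.nonsing_inv_mul S hdet,
        Matrix.one_mul, Matrix.mul_assoc, Matrix.mul_nonsing_inv S hdet, Matrix.mul_one]
    · rw [Matrix.mul_one, ← Matrix.mul_inv_rev, hSS]
  have := congr_psd hXinv hSisa
  rwa [hfin] at this

/-! ### 2×2 helpers -/

lemma psd_quadform {M : Matrix (Fin 2) (Fin 2) ℂ} (h : M.PosSemidef) (x : Fin 2 → ℂ) :
    0 ≤ star x ⬝ᵥ M *ᵥ x := h.dotProduct_mulVec_nonneg x


lemma real_q {a b c u w r : ℝ} (ha : 0 ≤ a) (hc : 0 ≤ c) (hb : b^2 ≤ a*c)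
    (hu : 0 ≤ u) (hw : 0 ≤ w) (hr : r^2 ≤ u*w) : 0 ≤ a*u + c*w + 2*b*r := by
  have h1 : (2*b*r)^2 ≤ (a*u + c*w)^2 := by
    nlinarith [sq_nonneg (a*u - c*w), mul_nonneg hu hw, sq_nonneg b, sq_nonneg r,
      mul_nonneg ha hc]
  have h2 : 0 ≤ a*u + c*w := by positivity
  have h3 := (abs_le_of_sq_le_sq' h1 h2).1
  linarith

lemma m2_herm (a b c : ℝ) : IsSelfAdjoint (!![(a:ℂ), (b:ℂ); (b:ℂ), (c:ℂ)]) := by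
  refine sa_iff_herm.mpr ?_
  show _ᴴ = _
  ext i j
  fin_cases i <;> fin_cases j <;>
    simp [Matrix.conjTranspose_apply, Complex.conj_ofReal]

lemma quad_expand (a b c : ℝ) (x : Fin 2 → ℂ) :
    star x ⬝ᵥ (!![(a:ℂ), (b:ℂ); (b:ℂ), (c:ℂ)]) *ᵥ x
      = ((a * Complex.normSq (x 0) + c * Complex.normSq (x 1)
          + 2*b*((starRingEnd ℂ) (x 0) * x 1).re : ℝ) : ℂ) := by
  simp only [dotProduct, Matrix.mulVec, Fin.sum_univ_two, Pi.star_apply]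
  apply Complex.ext <;>
    simp [Complex.normSq_apply, Complex.mul_re, Complex.mul_im, Complex.add_re,
      Complex.add_im, Complex.ofReal_re, Complex.ofReal_im, Matrix.cons_val_zero,
      Matrix.cons_val_one, Matrix.head_cons, RingHom.coe_coe, Complex.conj_re,
      Complex.conj_im] <;> ring

lemma m2_psd {a b c : ℝ} (ha : 0 ≤ a) (hc : 0 ≤ c) (hb : b^2 ≤ a*c) :
    (!![(a:ℂ), (b:ℂ); (b:ℂ), (c:ℂ)]).PosSemidef := by
  refine Matrix.PosSemidef.of_dotProduct_mulVec_nonneg (sa_iff_herm.mp (m2_herm a b c)) fun x => ?_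
  rw [quad_expand, Complex.zero_le_real]
  have hre : (((starRingEnd ℂ) (x 0) * x 1).re)^2
      ≤ Complex.normSq (x 0) * Complex.normSq (x 1) := by
    have h1 : (((starRingEnd ℂ) (x 0) * x 1).re)^2 ≤ Complex.normSq ((starRingEnd ℂ) (x 0) * x 1) := by
      rw [Complex.normSq_apply]; nlinarith [sq_nonneg (((starRingEnd ℂ) (x 0) * x 1).im)]
    rwa [Complex.normSq_mul, Complex.normSq_conj] at h1
  exact real_q ha hc hb (Complex.normSq_nonneg _) (Complex.normSq_nonneg _) hre

lemma m2_det (a b c : ℝ) :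
    (!![(a:ℂ), (b:ℂ); (b:ℂ), (c:ℂ)]).det = ((a*c - b^2 : ℝ) : ℂ) := by
  rw [Matrix.det_fin_two]
  push_cast
  norm_num
  ring

lemma m2_pd {a b c : ℝ} (ha : 0 ≤ a) (hc : 0 ≤ c) (hb : b^2 < a*c) :
    (!![(a:ℂ), (b:ℂ); (b:ℂ), (c:ℂ)]).PosDef := by
  refine posDef_of_posSemidef_isUnit (m2_psd ha hc hb.le) ?_
  rw [Matrix.isUnit_iff_isUnit_det, m2_det, isUnit_iff_ne_zero]
  exact Complex.ofReal_ne_zero.mpr (sub_ne_zero.mpr (ne_of_gt hb))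

lemma spec_m2_subset {a b c z v : ℝ} (h1 : a + c = z + v) (h2 : a*c - b^2 = z*v) :
    ∀ x ∈ spectrum ℝ (!![(a:ℂ), (b:ℂ); (b:ℂ), (c:ℂ)]), x = z ∨ x = v := by
  intro x hx
  by_contra hcon
  push_neg at hcon
  rw [spectrum.mem_iff] at hx
  apply hx
  rw [Matrix.isUnit_iff_isUnit_det]
  have hdet : ((algebraMap ℝ (Matrix (Fin 2) (Fin 2) ℂ)) x - !![(a:ℂ), (b:ℂ); (b:ℂ), (c:ℂ)]).det
      = ((x:ℂ) - z) * ((x:ℂ) - v) := by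
    have e1 : ((algebraMap ℝ (Matrix (Fin 2) (Fin 2) ℂ)) x - !![(a:ℂ), (b:ℂ); (b:ℂ), (c:ℂ)])
        = !![((x - a : ℝ):ℂ), ((-b : ℝ):ℂ); ((-b : ℝ):ℂ), ((x - c : ℝ):ℂ)] := by
      ext i j
      fin_cases i <;> fin_cases j <;>
        simp [Matrix.algebraMap_matrix_apply, Matrix.sub_apply]
    rw [e1, Matrix.det_fin_two]
    norm_num
    have h1' : (a:ℂ) + c = (z:ℂ) + v := by exact_mod_cast congrArg (Complex.ofReal) h1
    have h2' : (a:ℂ)*c - (b:ℂ)^2 = (z:ℂ)*v := by exact_mod_cast congrArg (Complex.ofReal) h2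
    push_cast
    linear_combination h2' - ((x:ℂ)) * h1'
  rw [hdet, isUnit_iff_ne_zero]
  exact mul_ne_zero (sub_ne_zero.mpr (by exact_mod_cast hcon.1))
    (sub_ne_zero.mpr (by exact_mod_cast hcon.2))

lemma cfc_eq_lin {N : ℕ} {M : Matrix (Fin N) (Fin N) ℂ} (hM : IsSelfAdjoint M) (g : ℝ → ℝ)
    {z v k : ℝ} (hzv : z ≠ v) (hk : k * (z - v) = g z - g v)
    (hspec : ∀ x ∈ spectrum ℝ M, x = z ∨ x = v) :
    cfc g M = algebraMap ℝ _ (g v - k * v) + k • M := by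
  have hcongr : cfc g M = cfc (fun x : ℝ => (g v - k * v) + k * x) M := by
    apply cfc_congr
    intro x hx
    rcases hspec x hx with rfl | rfl
    · linear_combination -hk
    · ring
  rw [hcongr, cfc_const_add (g v - k * v) (fun x : ℝ => k * x) M (contOn _ M) hM,
    cfc_const_mul k (fun x : ℝ => x) M (contOn _ M), cfc_id' ℝ M]

/-! ### Scalar consequences -/

def Mono2 (g : ℝ → ℝ) : Prop :=
  ∀ A B : Matrix (Fin 2) (Fin 2) ℂ, A.PosDef → B.PosDef → (B - A).PosSemidef →
    (cfc g B - cfc g A).PosSemidef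

lemma psd_entry00 {M : Matrix (Fin 2) (Fin 2) ℂ} (h : M.PosSemidef) : 0 ≤ M 0 0 := by
  have h2 := h.dotProduct_mulVec_nonneg ![1, 0]
  simpa [dotProduct, Matrix.mulVec, Fin.sum_univ_two] using h2

lemma star2 {g : ℝ → ℝ} (hg : Mono2 g) (hg1 : g 1 = 1) (hcont : ContinuousAt g 1)
    {s t : ℝ} (hs0 : 0 < s) (hs1 : s < 1) (ht : 1 < t) :
    (1 - s) * g t + (t - 1) * g s ≤ t - s := by
  have hts : t - s ≠ 0 := by linarith
  set d2 : ℝ := (1 - s) * (t - 1) with hd2def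
  have hd2 : 0 < d2 := by apply mul_pos <;> linarith
  set d : ℝ := Real.sqrt d2 with hddef
  have hdsq : d^2 = d2 := Real.sq_sqrt hd2.le
  set e : ℝ := t + s - 1 with hedef
  have he : 0 < e := by linarith
  set kA : ℝ := (g t - g s) / (t - s) with hkAdef
  have hkA : kA * (t - s) = g t - g s := div_mul_cancel₀ _ hts
  set A : Matrix (Fin 2) (Fin 2) ℂ := !![((1:ℝ):ℂ), (d:ℂ); (d:ℂ), (e:ℂ)] with hAdef
  have hApd : A.PosDef := by
    apply m2_pd (by norm_num) he.le
    rw [hdsq]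
    have hst : 0 < s * t := mul_pos hs0 (by linarith)
    nlinarith
  have hAsa : IsSelfAdjoint A := m2_herm 1 d e
  have hspecA : ∀ x ∈ spectrum ℝ A, x = t ∨ x = s := by
    apply spec_m2_subset
    · rw [hedef]; ring_nf
    · rw [hdsq, hedef, hd2def]; ring_nf
  have hts' : t ≠ s := fun hc => hts (by rw [hc]; ring)
  have hcfcA : cfc g A = algebraMap ℝ _ (g s - kA * s) + kA • A :=
    cfc_eq_lin hAsa g hts' hkA hspecA
  -- the epsilon step
  have key : ∀ ε : ℝ, 0 < ε → ε ≤ min (d2/3) 1 → g s + kA * (1 - s) ≤ g (1 + ε) := by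
    intro ε hε hεle
    have hε3 : ε ≤ d2/3 := le_trans hεle (min_le_left _ _)
    have hε1 : ε ≤ 1 := le_trans hεle (min_le_right _ _)
    set m : ℝ := e + d2/ε with hmdef
    have hm3 : 3 ≤ d2/ε := by
      rw [le_div_iff₀ hε]; linarith
    have hm : 1 + ε < m := by
      have h7 : 3 + e ≤ m := by simp only [hmdef]; linarith
      linarith
    set B : Matrix (Fin 2) (Fin 2) ℂ := !![((1+ε:ℝ):ℂ), ((0:ℝ):ℂ); ((0:ℝ):ℂ), (m:ℂ)] with hBdef
    have hBpd : B.PosDef := by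
      apply m2_pd (by linarith) (by linarith)
      have h0 : (0:ℝ) < 1 + ε := by linarith
      have h1 : (0:ℝ) < m := by linarith
      nlinarith
    have hBsa : IsSelfAdjoint B := m2_herm _ _ _
    have hBA : (B - A).PosSemidef := by
      have hBA_eq : B - A = !![((ε:ℝ):ℂ), ((-d:ℝ):ℂ); ((-d:ℝ):ℂ), ((d2/ε:ℝ):ℂ)] := by
        ext i j
        fin_cases i <;> fin_cases j
        · show ((1+ε:ℝ):ℂ) - ((1:ℝ):ℂ) = ((ε:ℝ):ℂ)
          push_cast; ring
        · show ((0:ℝ):ℂ) - (d:ℂ) = ((-d:ℝ):ℂ)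
          push_cast; ring
        · show ((0:ℝ):ℂ) - (d:ℂ) = ((-d:ℝ):ℂ)
          push_cast; ring
        · show (m:ℂ) - (e:ℂ) = ((d2/ε:ℝ):ℂ)
          rw [hmdef]; push_cast; ring
      rw [hBA_eq]
      apply m2_psd hε.le (by positivity)
      have : (-d)^2 = d2 := by rw [neg_pow]; rw [hdsq]; ring
      rw [this, mul_div_cancel₀ _ hε.ne']
    have hMpsd := hg A B hApd hBpd hBA
    have hmne : (1+ε) ≠ m := ne_of_lt hm
    set kB : ℝ := (g (1+ε) - g m) / ((1+ε) - m) with hkBdef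
    have hkB : kB * ((1+ε) - m) = g (1+ε) - g m := div_mul_cancel₀ _ (sub_ne_zero.mpr hmne)
    have hspecB : ∀ x ∈ spectrum ℝ B, x = (1+ε) ∨ x = m := by
      apply spec_m2_subset
      · ring_nf
      · ring_nf
    have hcfcB : cfc g B = algebraMap ℝ _ (g m - kB * m) + kB • B :=
      cfc_eq_lin hBsa g hmne hkB hspecB
    have hentry := psd_entry00 hMpsd
    rw [Matrix.sub_apply, hcfcA, hcfcB] at hentry
    have hcomp : (algebraMap ℝ (Matrix (Fin 2) (Fin 2) ℂ) (g m - kB * m) + kB • B) 0 0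
        - (algebraMap ℝ (Matrix (Fin 2) (Fin 2) ℂ) (g s - kA * s) + kA • A) 0 0
        = (((g m - kB * m) + kB * (1+ε) - ((g s - kA * s) + kA * 1) : ℝ) : ℂ) := by
      rw [Matrix.add_apply, Matrix.add_apply, Matrix.algebraMap_matrix_apply,
        Matrix.algebraMap_matrix_apply, Matrix.smul_apply, Matrix.smul_apply]
      norm_num [hAdef, hBdef]
      push_cast
      ring
    rw [hcomp, Complex.zero_le_real] at hentry
    have hrw : g m - kB * m + kB * (1+ε) = g (1+ε) := by linear_combination hkB
    rw [hrw] at hentry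
    linarith
  -- take the limit as ε → 0⁺
  have hminpos : 0 < min (d2/3) 1 := by
    apply lt_min (by linarith) one_pos
  have hev : ∀ᶠ ε in nhdsWithin (0:ℝ) (Set.Ioi 0), g s + kA * (1 - s) ≤ g (1 + ε) := by
    filter_upwards [Ioc_mem_nhdsGT_of_mem (Set.mem_Ico.mpr ⟨le_refl _, hminpos⟩)] with ε hε
    exact key ε hε.1 hε.2
  have hlim : Filter.Tendsto (fun ε : ℝ => g (1 + ε)) (nhdsWithin (0:ℝ) (Set.Ioi 0)) (nhds 1) := by
    have h1 : Filter.Tendsto (fun ε : ℝ => 1 + ε) (nhdsWithin (0:ℝ) (Set.Ioi 0)) (nhds 1) := by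
      have h2 : Filter.Tendsto (fun ε : ℝ => 1 + ε) (nhds 0) (nhds (1 + 0)) :=
        tendsto_const_nhds.add Filter.tendsto_id
      simpa using h2.mono_left nhdsWithin_le_nhds
    have := hcont.tendsto.comp h1
    rwa [hg1] at this
  have hfinal : g s + kA * (1 - s) ≤ 1 := ge_of_tendsto hlim hev
  have h5 : (g s + kA * (1 - s)) * (t - s) ≤ 1 * (t - s) :=
    mul_le_mul_of_nonneg_right hfinal (by linarith)
  have h6 : kA * (1 - s) * (t - s) = (g t - g s) * (1 - s) := by
    linear_combination (1 - s) * hkA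
  nlinarith [h5, h6]

lemma tangent {g : ℝ → ℝ} {ν : ℝ} (hg : Mono2 g) (hg1 : g 1 = 1) (hder : HasDerivAt g ν 1) :
    ∀ t : ℝ, 0 < t → g t ≤ 1 + ν*(t-1) := by
  have hcont : ContinuousAt g 1 := hder.continuousAt
  have hslope : Filter.Tendsto (fun s : ℝ => (g s - 1)/(s - 1))
      (nhdsWithin (1:ℝ) {(1:ℝ)}ᶜ) (nhds ν) := by
    have h := hasDerivAt_iff_tendsto_slope.mp hder
    have heq : (fun s : ℝ => (g s - 1)/(s - 1)) = slope g 1 := by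
      funext u
      rw [slope_def_field, hg1]
    rw [heq]
    exact h
  intro t ht
  rcases lt_trichotomy t 1 with h | h | h
  · -- t < 1 : send u → 1⁺
    have hmono : nhdsWithin (1:ℝ) (Set.Ioi 1) ≤ nhdsWithin (1:ℝ) {(1:ℝ)}ᶜ :=
      nhdsWithin_mono _ (fun x hx => ne_of_gt hx)
    have hev : ∀ᶠ u in nhdsWithin (1:ℝ) (Set.Ioi 1),
        g t ≤ 1 - (1-t)*((g u - 1)/(u-1)) := by
      filter_upwards [self_mem_nhdsWithin] with u hu
      have hu1 : (1:ℝ) < u := hu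
      have hstar := star2 hg hg1 hcont ht h hu1
      have hu1' : 0 < u - 1 := by linarith
      rw [← mul_le_mul_iff_right₀ hu1']
      have hexp : (u-1) * (1 - (1-t)*((g u - 1)/(u-1))) = (u-1) - (1-t)*(g u - 1) := by
        field_simp
      rw [hexp]
      nlinarith [hstar]
    have hR : Filter.Tendsto (fun u : ℝ => 1 - (1-t)*((g u - 1)/(u-1)))
        (nhdsWithin (1:ℝ) (Set.Ioi 1)) (nhds (1 - (1-t)*ν)) :=
      Filter.Tendsto.sub tendsto_const_nhds
        (Filter.Tendsto.mul tendsto_const_nhds (hslope.mono_left hmono))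
    have hle := ge_of_tendsto hR hev
    linarith
  · rw [h, hg1]; norm_num
  · -- t > 1 : send s → 1⁻
    have hmono : nhdsWithin (1:ℝ) (Set.Iio 1) ≤ nhdsWithin (1:ℝ) {(1:ℝ)}ᶜ :=
      nhdsWithin_mono _ (fun x hx => ne_of_lt hx)
    have hev : ∀ᶠ s in nhdsWithin (1:ℝ) (Set.Iio 1),
        g t ≤ 1 + (t-1)*((g s - 1)/(s-1)) := by
      filter_upwards [Ioo_mem_nhdsLT (show (0:ℝ) < 1 by norm_num)] with s hs
      have hs0 : 0 < s := hs.1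
      have hs1 : s < 1 := hs.2
      have hstar := star2 hg hg1 hcont hs0 hs1 h
      have hs1' : 0 < 1 - s := by linarith
      rw [← mul_le_mul_iff_right₀ hs1']
      have hexp : (1-s) * (1 + (t-1)*((g s - 1)/(s-1))) = (1-s) - (t-1)*(g s - 1) := by
        have hne : s - 1 ≠ 0 := by intro hc; linarith
        field_simp
        ring
      rw [hexp]
      nlinarith [hstar]
    have hR : Filter.Tendsto (fun s : ℝ => 1 + (t-1)*((g s - 1)/(s-1)))
        (nhdsWithin (1:ℝ) (Set.Iio 1)) (nhds (1 + (t-1)*ν)) :=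
      Filter.Tendsto.add tendsto_const_nhds
        (Filter.Tendsto.mul tendsto_const_nhds (hslope.mono_left hmono))
    have hle := ge_of_tendsto hR hev
    linarith

end MeanAux

section Main

open MeanAux

variable (f : ℝ → ℝ) (μ : ℝ)

lemma lin_entry (r k : ℝ) (M : Matrix (Fin 2) (Fin 2) ℂ) (i j : Fin 2) :
    (algebraMap ℝ (Matrix (Fin 2) (Fin 2) ℂ) r + k • M) i j
      = (if i = j then (r:ℂ) else 0) + (k:ℂ) * M i j := by
  rw [Matrix.add_apply, Matrix.smul_apply, Matrix.algebraMap_matrix_apply, Complex.real_smul]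
  norm_num

lemma m1_herm (s : ℝ) : IsSelfAdjoint (!![(s:ℂ)]) := by
  refine sa_iff_herm.mpr ?_
  show _ᴴ = _
  ext i j
  fin_cases i <;> fin_cases j <;> simp [Matrix.conjTranspose_apply, Complex.conj_ofReal]

lemma m1_psd {s : ℝ} (hs : 0 ≤ s) : (!![(s:ℂ)]).PosSemidef := by
  refine Matrix.PosSemidef.of_dotProduct_mulVec_nonneg (sa_iff_herm.mp (m1_herm s)) fun x => ?_
  have hx : star x ⬝ᵥ (!![(s:ℂ)]) *ᵥ x = ((s * Complex.normSq (x 0) : ℝ) : ℂ) := by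
    simp only [dotProduct, Matrix.mulVec, Fin.sum_univ_one, Pi.star_apply]
    apply Complex.ext <;>
      simp [Complex.normSq_apply, Complex.mul_re, Complex.mul_im] <;> ring
  rw [hx, Complex.zero_le_real]
  exact mul_nonneg hs (Complex.normSq_nonneg _)

lemma spec_m1 (s : ℝ) : ∀ x ∈ spectrum ℝ (!![(s:ℂ)]), x = s := by
  intro x hx
  by_contra hcon
  rw [spectrum.mem_iff] at hx
  apply hx
  rw [Matrix.isUnit_iff_isUnit_det]
  have hdet : ((algebraMap ℝ (Matrix (Fin 1) (Fin 1) ℂ)) x - !![(s:ℂ)]).det = ((x:ℂ) - s) := by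
    rw [Matrix.det_fin_one]
    simp [Matrix.algebraMap_matrix_apply, Matrix.sub_apply]
  rw [hdet, isUnit_iff_ne_zero]
  exact sub_ne_zero.mpr (by exact_mod_cast hcon)

lemma cfc_m1 (g : ℝ → ℝ) (s : ℝ) : cfc g (!![(s:ℂ)]) = !![((g s : ℝ):ℂ)] := by
  have h1 : cfc g (!![(s:ℂ)]) = cfc (fun _ : ℝ => g s) (!![(s:ℂ)]) :=
    cfc_congr fun x hx => by rw [spec_m1 s x hx]
  rw [h1, cfc_const _ _ (m1_herm s)]
  ext i j
  fin_cases i; fin_cases j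
  simp [Matrix.algebraMap_matrix_apply]

lemma mono1 (hmono : OperatorMonotone f) {s t : ℝ} (hs : 0 ≤ s) (hst : s ≤ t) :
    f s ≤ f t := by
  have hdiff : (!![(t:ℂ)] - !![(s:ℂ)]) = !![((t - s : ℝ):ℂ)] := by
    ext i j; fin_cases i; fin_cases j
    simp [Matrix.sub_apply]
  have h := hmono 1 (!![(s:ℂ)]) (!![(t:ℂ)]) (m1_psd hs) (m1_psd (hs.trans hst))
    (by rw [hdiff]; exact m1_psd (by linarith))
  rw [cfc_m1, cfc_m1] at h
  have h01 := h.dotProduct_mulVec_nonneg ![1]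
  have hval : star (![1] : Fin 1 → ℂ) ⬝ᵥ (!![((f t : ℝ):ℂ)] - !![((f s : ℝ):ℂ)]) *ᵥ ![1]
      = ((f t - f s : ℝ) : ℂ) := by
    simp [dotProduct, Matrix.mulVec, Fin.sum_univ_one, Matrix.sub_apply]
  rw [hval, Complex.zero_le_real] at h01
  linarith

lemma fpos (hmono : OperatorMonotone f) (hnn : ∀ t ≥ (0:ℝ), 0 ≤ f t) (hf1 : f 1 = 1) :
    ∀ t : ℝ, 0 < t → 0 < f t := by
  intro v hv
  rcases le_or_gt 1 v with h1 | h1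
  · have h := mono1 f hmono (by norm_num) h1
    rw [hf1] at h
    linarith
  · by_contra hcon
    push_neg at hcon
    have hfv : f v = 0 := le_antisymm hcon (hnn v hv.le)
    have hfv2 : f (v/2) = 0 :=
      le_antisymm (hfv ▸ mono1 f hmono (by linarith) (by linarith)) (hnn _ (by linarith))
    set d2 : ℝ := v - 3*v^2/4 with hd2def
    have hd2 : 0 < d2 := by
      rw [hd2def]
      nlinarith [mul_lt_mul_of_pos_left h1 hv]
    set d : ℝ := Real.sqrt d2 with hddef
    have hdsq : d^2 = d2 := Real.sq_sqrt hd2.le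
    have hdd : d*d = v - 3*v^2/4 := by rw [← hd2def, ← hdsq]; ring
    set A : Matrix (Fin 2) (Fin 2) ℂ := !![((v/2:ℝ):ℂ), ((0:ℝ):ℂ); ((0:ℝ):ℂ), ((1:ℝ):ℂ)]
      with hAdef
    set B : Matrix (Fin 2) (Fin 2) ℂ := !![((3*v/2:ℝ):ℂ), (d:ℂ); (d:ℂ), ((2 - v/2:ℝ):ℂ)]
      with hBdef
    have hApsd : A.PosSemidef := m2_psd (by linarith) (by norm_num) (by nlinarith)
    have hBpsd : B.PosSemidef := by
      apply m2_psd (by linarith) (by linarith)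
      rw [hdsq]
      nlinarith
    have hBA : (B - A).PosSemidef := by
      have hBA_eq : B - A = !![((v:ℝ):ℂ), (d:ℂ); (d:ℂ), ((1 - v/2:ℝ):ℂ)] := by
        ext i j
        fin_cases i <;> fin_cases j
        · show ((3*v/2:ℝ):ℂ) - ((v/2:ℝ):ℂ) = ((v:ℝ):ℂ)
          push_cast; ring
        · show (d:ℂ) - ((0:ℝ):ℂ) = (d:ℂ)
          push_cast; ring
        · show (d:ℂ) - ((0:ℝ):ℂ) = (d:ℂ)
          push_cast; ring
        · show ((2 - v/2:ℝ):ℂ) - ((1:ℝ):ℂ) = ((1 - v/2:ℝ):ℂ)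
          push_cast; ring
      rw [hBA_eq]
      exact m2_psd (by linarith) (by linarith) (by rw [hdsq]; nlinarith)
    have hMpsd := hmono 2 A B hApsd hBpsd hBA
    -- interpolations
    have hne1 : (1:ℝ) ≠ v/2 := by intro hc; linarith
    set kA : ℝ := (f 1 - f (v/2)) / (1 - v/2) with hkAdef
    have hkA : kA * (1 - v/2) = f 1 - f (v/2) := div_mul_cancel₀ _ (by intro hc; linarith)
    have hkAval : kA * (1 - v/2) = 1 := by rw [hkA, hf1, hfv2]; ring
    have hspecA : ∀ x ∈ spectrum ℝ A, x = 1 ∨ x = v/2 := by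
      apply spec_m2_subset
      · ring_nf
      · ring_nf
    have hAsa : IsSelfAdjoint A := m2_herm _ _ _
    have hcfcA : cfc f A = algebraMap ℝ _ (f (v/2) - kA * (v/2)) + kA • A :=
      cfc_eq_lin hAsa f hne1 hkA hspecA
    have hne2 : (2:ℝ) ≠ v := by intro hc; linarith
    set kB : ℝ := (f 2 - f v) / (2 - v) with hkBdef
    have hkB : kB * (2 - v) = f 2 - f v := div_mul_cancel₀ _ (by intro hc; linarith)
    have hspecB : ∀ x ∈ spectrum ℝ B, x = 2 ∨ x = v := by
      apply spec_m2_subset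
      · ring_nf
      · rw [hdsq, hd2def]; ring_nf
    have hBsa : IsSelfAdjoint B := m2_herm _ _ _
    have hcfcB : cfc f B = algebraMap ℝ _ (f v - kB * v) + kB • B :=
      cfc_eq_lin hBsa f hne2 hkB hspecB
    -- explicit difference matrix
    have e1 : cfc f B - cfc f A
        = !![((kB*v/2:ℝ):ℂ), ((kB*d:ℝ):ℂ);
             ((kB*d:ℝ):ℂ), ((kB*(2-3*v/2) - kA*(1-v/2):ℝ):ℂ)] := by
      rw [hcfcA, hcfcB, hfv, hfv2]
      ext i j
      rw [Matrix.sub_apply, lin_entry, lin_entry]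
      fin_cases i <;> fin_cases j <;>
        (norm_num [hAdef, hBdef]; try push_cast; try ring)
    rw [e1] at hMpsd
    have hq := psd_quadform hMpsd ![(d:ℂ), ((-(v/2):ℝ):ℂ)]
    rw [quad_expand] at hq
    have hqval : (kB*v/2) * Complex.normSq ((![(d:ℂ), ((-(v/2):ℝ):ℂ)]) 0)
          + (kB*(2-3*v/2) - kA*(1-v/2)) * Complex.normSq ((![(d:ℂ), ((-(v/2):ℝ):ℂ)]) 1)
          + 2*(kB*d)*(((starRingEnd ℂ) ((![(d:ℂ), ((-(v/2):ℝ):ℂ)]) 0)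
              * (![(d:ℂ), ((-(v/2):ℝ):ℂ)]) 1).re)
        = -(v^2)/4 := by
      simp [Complex.normSq_ofReal, Complex.conj_ofReal, ← Complex.ofReal_mul]
      linear_combination (-(v/2)*kB) * hdd + (-(v^2/4)) * hkAval
    rw [hqval, Complex.zero_le_real] at hq
    nlinarith [sq_nonneg v, mul_pos hv hv]

end Main

open MeanAux in
/-- The arithmetic–mean–harmonic inequality `A!_μB ≤ AσB ≤ A∇_μB` for a Kubo–Ando mean
`σ` with operator monotone representing function `f`, `f(1) = 1`, `μ = f'(1)`. -/
theorem mean_between_harmonic_and_arithmetic (f : ℝ → ℝ) (μ : ℝ)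
    (hmono : OperatorMonotone f) (hnn : ∀ t ≥ (0:ℝ), 0 ≤ f t)
    (hf1 : f 1 = 1) (hder : HasDerivAt f μ 1)
    (n : ℕ) (A B : Matrix (Fin n) (Fin n) ℂ) (hA : A.PosDef) (hB : B.PosDef) :
    (opMean f A B - ((1 - μ) • A⁻¹ + μ • B⁻¹)⁻¹).PosSemidef ∧
    (((1 - μ) • A + μ • B) - opMean f A B).PosSemidef := by
  ----------------------------------------------------------------
  -- Scalar facts
  ----------------------------------------------------------------
  have hfp : ∀ x : ℝ, 0 < x → 0 < f x := fpos f hmono hnn hf1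
  have hMono2f : Mono2 f := fun A' B' hA' hB' h =>
    hmono 2 A' B' hA'.posSemidef hB'.posSemidef h
  have htan : ∀ x : ℝ, 0 < x → f x ≤ 1 + μ*(x-1) := tangent hMono2f hf1 hder
  -- the adjoint function q
  set q : ℝ → ℝ := fun x => (f x⁻¹)⁻¹ with hqdef
  have hq1 : q 1 = 1 := by rw [hqdef]; simp [hf1]
  have hqder : HasDerivAt q μ 1 := by
    have hinv1 : HasDerivAt (fun x : ℝ => x⁻¹) (-1 : ℝ) 1 := by
      simpa using hasDerivAt_inv (one_ne_zero (α := ℝ))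
    have hf_at : HasDerivAt f μ ((1:ℝ)⁻¹) := by rwa [inv_one]
    have hcomp1 : HasDerivAt (fun x : ℝ => f x⁻¹) (μ * -1) 1 := by
      have := hf_at.comp 1 hinv1
      simpa [Function.comp_def] using this
    have hinv2 : HasDerivAt (fun y : ℝ => y⁻¹) (-1 : ℝ) (f ((1:ℝ)⁻¹)) := by
      rw [inv_one, hf1]
      simpa using hasDerivAt_inv (one_ne_zero (α := ℝ))
    have hq' : HasDerivAt q (-1 * (μ * -1)) 1 := by
      have := hinv2.comp 1 hcomp1
      simpa [hqdef, Function.comp_def] using this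
    simpa using hq'
  -- cfc of q on positive definite matrices
  have hcfcq : ∀ {m : ℕ} (M : Matrix (Fin m) (Fin m) ℂ), M.PosDef →
      cfc q M = (cfc f M⁻¹)⁻¹ := by
    intro m M hM
    have hMsa : IsSelfAdjoint M := hM.isHermitian.isSelfAdjoint
    have hMinv : M⁻¹.PosDef := hM.inv
    have h1 : cfc (fun x : ℝ => f x⁻¹) M = cfc f M⁻¹ := by
      have hcomp := cfc_comp f (fun x : ℝ => x⁻¹) M hMsa
        (contOn_finite f (Matrix.finite_real_spectrum.image _))
        (contOn _ M)
      rw [show (fun x : ℝ => f x⁻¹) = (f ∘ fun x : ℝ => x⁻¹) from rfl, hcomp,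
        ← inv_eq_cfc_inv hM]
    have h2 : (cfc (fun x : ℝ => f x⁻¹) M)⁻¹ = cfc (fun x : ℝ => (f x⁻¹)⁻¹) M :=
      cfc_inv_eq hMsa (fun x hx => (hfp _ (inv_pos.mpr (specPos hM x hx))).ne')
    rw [hqdef, ← h2, h1]
  have hMono2q : Mono2 q := by
    intro A' B' hA' hB' hdiff
    have h1 : (A'⁻¹ - B'⁻¹).PosSemidef := inv_antitone hA' hB' hdiff
    have h2 := hmono 2 B'⁻¹ A'⁻¹ hB'.inv.posSemidef hA'.inv.posSemidef h1
    have hFA : (cfc f A'⁻¹).PosDef := cfc_pd hA'.inv.isHermitian.isSelfAdjoint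
      (fun x hx => hfp x (specPos hA'.inv x hx))
    have hFB : (cfc f B'⁻¹).PosDef := cfc_pd hB'.inv.isHermitian.isSelfAdjoint
      (fun x hx => hfp x (specPos hB'.inv x hx))
    have h3 := inv_antitone hFB hFA h2
    rwa [← hcfcq A' hA', ← hcfcq B' hB'] at h3
  have htanq : ∀ x : ℝ, 0 < x → q x ≤ 1 + μ*(x-1) := tangent hMono2q hq1 hqder
  -- bounds on μ
  have hμ1 : μ ≤ 1 := by
    by_contra hcon
    push_neg at hcon
    set x : ℝ := (μ - 1)/(2*μ) with hxdef
    have hμpos : 0 < μ := by linarith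
    have hx0 : 0 < x := by
      rw [hxdef]; apply div_pos <;> linarith
    have hx2 : 1 + μ*(x-1) = (μ-1)/2 + (1 - μ) := by
      rw [hxdef]; field_simp; ring
    have hqx : 0 < q x := by
      rw [hqdef]
      exact inv_pos.mpr (hfp _ (inv_pos.mpr hx0))
    have := htanq x hx0
    rw [hx2] at this
    linarith
  have hμ0 : 0 ≤ μ := by
    have hslope : Filter.Tendsto (fun s : ℝ => (f s - 1)/(s - 1))
        (nhdsWithin (1:ℝ) {(1:ℝ)}ᶜ) (nhds μ) := by
      have h := hasDerivAt_iff_tendsto_slope.mp hder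
      have heq : (fun s : ℝ => (f s - 1)/(s - 1)) = slope f 1 := by
        funext u; rw [slope_def_field, hf1]
      rw [heq]; exact h
    have hmono' : nhdsWithin (1:ℝ) (Set.Ioi 1) ≤ nhdsWithin (1:ℝ) {(1:ℝ)}ᶜ :=
      nhdsWithin_mono _ (fun x hx => ne_of_gt hx)
    have hev : ∀ᶠ u in nhdsWithin (1:ℝ) (Set.Ioi 1), 0 ≤ (f u - 1)/(u - 1) := by
      filter_upwards [self_mem_nhdsWithin] with u hu
      have hu1 : (1:ℝ) < u := hu
      have := mono1 f hmono (by norm_num) hu1.le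
      rw [hf1] at this
      apply div_nonneg <;> linarith
    exact ge_of_tendsto (hslope.mono_left hmono') hev
  -- the harmonic scalar bound
  have hdenom : ∀ x : ℝ, 0 < x → 0 < (1-μ) + μ*x⁻¹ := by
    intro x hx
    rcases eq_or_lt_of_le hμ1 with h | h
    · rw [h]; simpa using inv_pos.mpr hx
    · have : 0 ≤ μ*x⁻¹ := mul_nonneg hμ0 (inv_pos.mpr hx).le
      linarith
  have hharm : ∀ x : ℝ, 0 < x → ((1-μ) + μ*x⁻¹)⁻¹ ≤ f x := by
    intro x hx
    have hxinv : 0 < x⁻¹ := inv_pos.mpr hx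
    have h1 := htanq x⁻¹ hxinv
    rw [hqdef] at h1
    simp only [inv_inv] at h1
    -- h1 : (f x)⁻¹ ≤ 1 + μ*(x⁻¹ - 1)
    have hfx : 0 < f x := hfp x hx
    have hD : 0 < (1-μ) + μ*x⁻¹ := hdenom x hx
    have hEq : 1 + μ*(x⁻¹ - 1) = (1-μ) + μ*x⁻¹ := by ring
    rw [hEq] at h1
    have hkey : 1 ≤ f x * ((1-μ) + μ*x⁻¹) := by
      have h2 := mul_le_mul_of_nonneg_left h1 hfx.le
      rwa [mul_inv_cancel₀ hfx.ne'] at h2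
    have h3 : ((1-μ) + μ*x⁻¹) * ((1-μ) + μ*x⁻¹)⁻¹ = 1 := mul_inv_cancel₀ hD.ne'
    nlinarith [hkey, h3, hD]
  ----------------------------------------------------------------
  -- Matrix assembly
  ----------------------------------------------------------------
  set S : Matrix (Fin n) (Fin n) ℂ := msqrt A with hSdef
  have hS : S.PosDef := msqrt_posDef hA
  have hSsa : IsSelfAdjoint S := msqrt_sa hA.isHermitian.isSelfAdjoint
  have hSu : IsUnit S := hS.isUnit
  have hdetS : IsUnit S.det := (Matrix.isUnit_iff_isUnit_det S).mp hSu
  have hSS : S * S = A := msqrt_mul_self hA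
  have hSiu : IsUnit S⁻¹ := hS.inv.isUnit
  have hSisa : IsSelfAdjoint S⁻¹ := sa_iff_herm.mpr (sa_iff_herm.mp hSsa).inv
  set C : Matrix (Fin n) (Fin n) ℂ := S⁻¹ * B * S⁻¹ with hCdef
  have hC : C.PosDef := congr_pd hB hSisa hSiu
  have hCsa : IsSelfAdjoint C := hC.isHermitian.isSelfAdjoint
  have hdetB : IsUnit B.det := (Matrix.isUnit_iff_isUnit_det B).mp hB.isUnit
  have hSCS : S * C * S = B := by
    rw [hCdef, ← Matrix.mul_assoc, ← Matrix.mul_assoc, Matrix.mul_nonsing_inv S hdetS,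
      Matrix.one_mul, Matrix.mul_assoc, Matrix.nonsing_inv_mul S hdetS, Matrix.mul_one]
  have hopMean : opMean f A B = S * cfc f C * S := by
    rw [opMean, hCdef, hSdef]
  -- upper bound
  have hg2 : cfc (fun x : ℝ => (1-μ) + μ*x) C
      = (1-μ) • (1 : Matrix (Fin n) (Fin n) ℂ) + μ • C := by
    rw [cfc_const_add _ _ C (contOn _ C) hCsa,
      cfc_const_mul μ (fun x : ℝ => x) C (contOn _ C), cfc_id' ℝ C,
      Algebra.algebraMap_eq_smul_one]
  have hupperC : (cfc (fun x : ℝ => (1-μ) + μ*x) C - cfc f C).PosSemidef := by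
    rw [← cfc_sub _ _ C (contOn _ C) (contOn _ C)]
    exact cfc_psd hCsa fun x hx => by
      have := htan x (specPos hC x hx); linarith
  have hupper : (((1 - μ) • A + μ • B) - opMean f A B).PosSemidef := by
    have hcong := congr_psd hupperC hSsa
    have heq : S * (cfc (fun x : ℝ => (1-μ) + μ*x) C - cfc f C) * S
        = ((1 - μ) • A + μ • B) - opMean f A B := by
      rw [Matrix.mul_sub, Matrix.sub_mul, hopMean, hg2]
      congr 1
      rw [Matrix.mul_add, Matrix.add_mul]
      rw [Matrix.mul_smul, Matrix.smul_mul, Matrix.mul_one, hSS,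
        Matrix.mul_smul, Matrix.smul_mul, hSCS]
    rwa [heq] at hcong
  -- lower bound
  have hdenomC : ∀ x ∈ spectrum ℝ C, 0 < (1-μ) + μ*x⁻¹ :=
    fun x hx => hdenom x (specPos hC x hx)
  set D : Matrix (Fin n) (Fin n) ℂ := (1-μ) • (1 : Matrix (Fin n) (Fin n) ℂ) + μ • C⁻¹
    with hDdef
  have hDcfc : cfc (fun x : ℝ => (1-μ) + μ*x⁻¹) C = D := by
    rw [cfc_const_add _ _ C (contOn _ C) hCsa,
      cfc_const_mul μ (fun x : ℝ => x⁻¹) C (contOn _ C), ← inv_eq_cfc_inv hC,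
      Algebra.algebraMap_eq_smul_one, hDdef]
  have hDpd : D.PosDef := by
    rw [← hDcfc]
    exact cfc_pd hCsa hdenomC
  have hdetD : IsUnit D.det := (Matrix.isUnit_iff_isUnit_det D).mp hDpd.isUnit
  have hcfch : cfc (fun x : ℝ => ((1-μ) + μ*x⁻¹)⁻¹) C = D⁻¹ := by
    rw [← hDcfc]
    exact (cfc_inv_eq hCsa (fun x hx => (hdenomC x hx).ne')).symm
  have hlowerC : (cfc f C - D⁻¹).PosSemidef := by
    rw [← hcfch, ← cfc_sub _ _ C (contOn _ C) (contOn _ C)]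
    exact cfc_psd hCsa fun x hx => by
      have := hharm x (specPos hC x hx); linarith
  have hCinv : C⁻¹ = S * B⁻¹ * S := by
    rw [hCdef, Matrix.mul_inv_rev, Matrix.mul_inv_rev,
      Matrix.nonsing_inv_nonsing_inv S hdetS, Matrix.mul_assoc]
  have hAinv : A⁻¹ = S⁻¹ * S⁻¹ := by
    rw [← hSS, Matrix.mul_inv_rev]
  have harm_eq : ((1 - μ) • A⁻¹ + μ • B⁻¹)⁻¹ = S * D⁻¹ * S := by
    have h1 : (1 - μ) • A⁻¹ + μ • B⁻¹ = S⁻¹ * D * S⁻¹ := by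
      rw [hDdef, Matrix.mul_add, Matrix.add_mul]
      congr 1
      · rw [Matrix.mul_smul, Matrix.smul_mul, Matrix.mul_one, hAinv]
      · rw [Matrix.mul_smul, Matrix.smul_mul, hCinv]
        congr 1
        rw [← Matrix.mul_assoc, ← Matrix.mul_assoc, Matrix.nonsing_inv_mul S hdetS,
          Matrix.one_mul, Matrix.mul_assoc, Matrix.mul_nonsing_inv S hdetS, Matrix.mul_one]
    rw [h1, Matrix.mul_inv_rev, Matrix.mul_inv_rev,
      Matrix.nonsing_inv_nonsing_inv S hdetS, Matrix.mul_assoc]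
  have hlower : (opMean f A B - ((1 - μ) • A⁻¹ + μ • B⁻¹)⁻¹).PosSemidef := by
    have hcong := congr_psd hlowerC hSsa
    have heq : S * (cfc f C - D⁻¹) * S
        = opMean f A B - ((1 - μ) • A⁻¹ + μ • B⁻¹)⁻¹ := by
      rw [Matrix.mul_sub, Matrix.sub_mul, hopMean, harm_eq]
    rwa [heq] at hcong
  exact ⟨hlower, hupper⟩
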